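/- Let d ≥ 1 and let N be a natural number with N > d. There exists a constant C > 0 such that for all n, k ∈ ℤ^d one has ∑_{m ∈ ℤ^d} 1 / ((1 + ‖n−m‖^N)(1 + ‖k−m‖^N)) ≤ C / (1 + ‖n−k‖^N). -/

import Mathlib

/-- The lattice point `m ∈ ℤ^d` viewed as a point of `ℝ^d`. -/
noncomputable def latt (d : ℕ) (m : Fin d → ℤ) : EuclideanSpace ℝ (Fin d) :=
  WithLp.toLp 2 (fun i => (m i : ℝ))

lemma latt_sub (d : ℕ) (n m : Fin d → ℤ) : latt d (n - m) = latt d n - latt d m := by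
  ext i
  simp [latt]

/-- coordinate bound in Euclidean space -/
lemma coord_le_norm (d : ℕ) (m : Fin d → ℤ) (i : Fin d) :
    |((m i : ℤ) : ℝ)| ≤ ‖latt d m‖ := by
  have h := EuclideanSpace.norm_eq (latt d m)
  rw [h]
  have h1 : |((m i : ℤ) : ℝ)| = Real.sqrt (‖latt d m i‖ ^ 2) := by
    rw [Real.sqrt_sq_eq_abs]
    simp [latt]
  rw [h1]
  apply Real.sqrt_le_sqrt
  exact Finset.single_le_sum (f := fun j => ‖latt d m j‖ ^ 2)
    (fun j _ => sq_nonneg _) (Finset.mem_univ i)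

/-- 1-dimensional summability -/
lemma one_dim_summable {p : ℝ} (hp : 1 < p) :
    Summable (fun n : ℤ => (1 + |(n : ℝ)|) ^ (-p)) := by
  have hnat : Summable (fun n : ℕ => ((n : ℝ)) ^ (-p)) :=
    Real.summable_nat_rpow.mpr (by linarith)
  have hsucc : Summable (fun n : ℕ => (1 + (n : ℝ)) ^ (-p)) := by
    have := hnat.comp_injective Nat.succ_injective
    refine this.congr fun n => ?_
    simp [Function.comp, Nat.succ_eq_add_one]
    ring_nf
  apply Summable.of_nat_of_neg
  · exact hsucc.congr fun n => by simp [abs_of_nonneg (Nat.cast_nonneg (α := ℝ) n)]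
  · refine hsucc.congr fun n => ?_
    simp [abs_of_nonneg (Nat.cast_nonneg (α := ℝ) n)]

/-- product summability over ℤ^d -/
lemma prod_summable {p : ℝ} (hp : 1 < p) :
    ∀ d : ℕ, Summable (fun m : Fin d → ℤ => ∏ i, (1 + |((m i : ℤ) : ℝ)|) ^ (-p)) := by
  intro d
  induction d with
  | zero =>
      haveI : Finite (Fin 0 → ℤ) := Finite.of_subsingleton
      exact .of_finite
  | succ d ih =>
      have h1 := one_dim_summable hp
      have hmul := h1.mul_of_nonneg ih
        (fun n => Real.rpow_nonneg (by positivity) _)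
        (fun m => Finset.prod_nonneg fun i _ => Real.rpow_nonneg (by positivity) _)
      apply ((Fin.consEquiv (fun _ : Fin (d + 1) => ℤ)).summable_iff).mp
      refine hmul.congr fun x => ?_
      simp only [Function.comp_apply, Fin.consEquiv_apply]
      rw [Fin.prod_univ_succ]
      simp

/-- summability of 1/(1+‖m‖^N) over ℤ^d -/
lemma base_summable (d N : ℕ) (hd : 1 ≤ d) (hN : d < N) :
    Summable (fun m : Fin d → ℤ => 1 / (1 + ‖latt d m‖ ^ N)) := by
  set p : ℝ := (N : ℝ) / d with hp_def
  have hd0 : (0 : ℝ) < d := by exact_mod_cast hd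
  have hp : 1 < p := by
    rw [hp_def, lt_div_iff₀ hd0]
    exact_mod_cast by simpa using hN
  have hdp : (d : ℝ) * p = (N : ℝ) := by
    rw [hp_def]; field_simp [hd0.ne']
  have hsum := (prod_summable hp d).mul_left ((2 : ℝ) ^ N)
  refine Summable.of_nonneg_of_le (fun m => by positivity) (fun m => ?_) hsum
  set M := ‖latt d m‖ with hM
  have hM0 : 0 ≤ M := norm_nonneg _
  -- step 1 : ∏ (1+|m i|)^(-p) ≥ (1+M)^(-N)
  have hstep1 : ((1 + M) ^ N)⁻¹ ≤ ∏ i, (1 + |((m i : ℤ) : ℝ)|) ^ (-p) := by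
    have hprod_le : (∏ i, (1 + |((m i : ℤ) : ℝ)|)) ≤ (1 + M) ^ d := by
      calc (∏ i, (1 + |((m i : ℤ) : ℝ)|)) ≤ ∏ _i : Fin d, (1 + M) := by
            apply Finset.prod_le_prod (fun i _ => by positivity)
            intro i _
            have := coord_le_norm d m i
            linarith
        _ = (1 + M) ^ d := by simp
    have hprod_pos : (0 : ℝ) < ∏ i, (1 + |((m i : ℤ) : ℝ)|) :=
      Finset.prod_pos fun i _ => by positivity
    rw [Real.finset_prod_rpow _ _ (fun i _ => by positivity)]
    have h1 : ((1 + M) ^ d : ℝ) ^ (-p) ≤ (∏ i, (1 + |((m i : ℤ) : ℝ)|)) ^ (-p) :=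
      Real.rpow_le_rpow_of_nonpos hprod_pos hprod_le (by linarith)
    refine le_trans (le_of_eq ?_) h1
    rw [← Real.rpow_natCast (1 + M) d, ← Real.rpow_mul (by linarith),
      ← Real.rpow_natCast (1 + M) N, ← Real.rpow_neg (by linarith)]
    congr 1
    rw [mul_neg, hdp]
  -- step 2 : (1+M)^N ≤ 2^N * (1+M^N)
  have hstep2 : (1 + M) ^ N ≤ 2 ^ N * (1 + M ^ N) := by
    rcases le_total M 1 with h | h
    · calc (1 + M) ^ N ≤ 2 ^ N := pow_le_pow_left₀ (by linarith) (by linarith) N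
        _ ≤ 2 ^ N * (1 + M ^ N) := by nlinarith [pow_nonneg hM0 N, pow_pos (show (0:ℝ) < 2 by norm_num) N]
    · calc (1 + M) ^ N ≤ (2 * M) ^ N := pow_le_pow_left₀ (by linarith) (by linarith) N
        _ = 2 ^ N * M ^ N := mul_pow 2 M N
        _ ≤ 2 ^ N * (1 + M ^ N) := by nlinarith [pow_pos (show (0:ℝ) < 2 by norm_num) N]
  have hMN : (0 : ℝ) < 1 + M ^ N := by positivity
  have h1M : (0 : ℝ) < (1 + M) ^ N := by positivity
  calc 1 / (1 + M ^ N) ≤ 2 ^ N * ((1 + M) ^ N)⁻¹ := by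
        rw [← div_eq_mul_inv, div_le_div_iff₀ hMN h1M]
        nlinarith [hstep2]
    _ ≤ 2 ^ N * ∏ i, (1 + |((m i : ℤ) : ℝ)|) ^ (-p) := by
        apply mul_le_mul_of_nonneg_left hstep1 (by positivity)

/-- pointwise convolution inequality -/
lemma pointwise_bound (N : ℕ) (a b r : ℝ) (ha : 0 ≤ a) (hb : 0 ≤ b) (hr : 0 ≤ r)
    (htri : r ≤ a + b) :
    1 / ((1 + a ^ N) * (1 + b ^ N)) ≤
      2 ^ N / (1 + r ^ N) * (1 / (1 + a ^ N) + 1 / (1 + b ^ N)) := by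
  have ha' : (0 : ℝ) < 1 + a ^ N := by positivity
  have hb' : (0 : ℝ) < 1 + b ^ N := by positivity
  have hr' : (0 : ℝ) < 1 + r ^ N := by positivity
  have hmax : r / 2 ≤ a ∨ r / 2 ≤ b := by
    by_contra h
    push_neg at h
    linarith [h.1, h.2]
  have key : ∀ x : ℝ, 0 ≤ x → r / 2 ≤ x → 1 + r ^ N ≤ 2 ^ N * (1 + x ^ N) := by
    intro x hx hrx
    have h1 : (r / 2) ^ N ≤ x ^ N := pow_le_pow_left₀ (by positivity) hrx N
    have h2 : 2 ^ N * (r / 2) ^ N = r ^ N := by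
      rw [← mul_pow]; ring_nf
    have h3 : (1 : ℝ) ≤ 2 ^ N := one_le_pow₀ (by norm_num)
    nlinarith [pow_pos (show (0:ℝ) < 2 by norm_num) N]
  rcases hmax with h | h
  · have hk := key a ha h
    have : 1 / (1 + a ^ N) ≤ 2 ^ N / (1 + r ^ N) := by
      rw [div_le_div_iff₀ ha' hr']
      linarith
    calc 1 / ((1 + a ^ N) * (1 + b ^ N)) = (1 / (1 + a ^ N)) * (1 / (1 + b ^ N)) := by
          rw [div_mul_div_comm, one_mul]
      _ ≤ (2 ^ N / (1 + r ^ N)) * (1 / (1 + b ^ N)) := by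
          apply mul_le_mul_of_nonneg_right this (by positivity)
      _ ≤ 2 ^ N / (1 + r ^ N) * (1 / (1 + a ^ N) + 1 / (1 + b ^ N)) := by
          apply mul_le_mul_of_nonneg_left _ (by positivity)
          have : (0:ℝ) ≤ 1 / (1 + a ^ N) := by positivity
          linarith
  · have hk := key b hb h
    have : 1 / (1 + b ^ N) ≤ 2 ^ N / (1 + r ^ N) := by
      rw [div_le_div_iff₀ hb' hr']
      linarith
    calc 1 / ((1 + a ^ N) * (1 + b ^ N)) = (1 / (1 + b ^ N)) * (1 / (1 + a ^ N)) := by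
          rw [div_mul_div_comm, one_mul, mul_comm]
      _ ≤ (2 ^ N / (1 + r ^ N)) * (1 / (1 + a ^ N)) := by
          apply mul_le_mul_of_nonneg_right this (by positivity)
      _ ≤ 2 ^ N / (1 + r ^ N) * (1 / (1 + a ^ N) + 1 / (1 + b ^ N)) := by
          apply mul_le_mul_of_nonneg_left _ (by positivity)
          have : (0:ℝ) ≤ 1 / (1 + b ^ N) := by positivity
          linarith

lemma translate_summable (d N : ℕ) (hd : 1 ≤ d) (hN : d < N) (n : Fin d → ℤ) :
    Summable (fun m : Fin d → ℤ => 1 / (1 + ‖latt d n - latt d m‖ ^ N)) := by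
  have hS := base_summable d N hd hN
  have := hS.comp_injective (Equiv.subLeft n).injective
  refine this.congr fun m => ?_
  simp [Function.comp, latt_sub]

lemma translate_tsum (d N : ℕ) (n : Fin d → ℤ) :
    (∑' m : Fin d → ℤ, 1 / (1 + ‖latt d n - latt d m‖ ^ N)) =
      ∑' m : Fin d → ℤ, 1 / (1 + ‖latt d m‖ ^ N) := by
  rw [← (Equiv.subLeft n).tsum_eq (fun m => 1 / (1 + ‖latt d m‖ ^ N))]
  refine tsum_congr fun m => ?_
  simp [latt_sub]

theorem stmt2 (d N : ℕ) (hd : 1 ≤ d) (hN : d < N) :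
    ∃ C > (0 : ℝ), ∀ n k : Fin d → ℤ,
      Summable (fun m : Fin d → ℤ =>
        1 / ((1 + ‖latt d n - latt d m‖ ^ N) * (1 + ‖latt d k - latt d m‖ ^ N))) ∧
      (∑' m : Fin d → ℤ,
        1 / ((1 + ‖latt d n - latt d m‖ ^ N) * (1 + ‖latt d k - latt d m‖ ^ N)))
        ≤ C / (1 + ‖latt d n - latt d k‖ ^ N) := by
  set S : ℝ := ∑' m : Fin d → ℤ, 1 / (1 + ‖latt d m‖ ^ N) with hS_def
  have hS_nonneg : 0 ≤ S := tsum_nonneg fun m => by positivity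
  refine ⟨2 ^ N * (2 * S) + 1, by positivity, fun n k => ?_⟩
  set r : ℝ := ‖latt d n - latt d k‖ with hr_def
  have hr' : (0 : ℝ) < 1 + r ^ N := by positivity
  have hFn := translate_summable d N hd hN n
  have hFk := translate_summable d N hd hN k
  have hbound : ∀ m : Fin d → ℤ,
      1 / ((1 + ‖latt d n - latt d m‖ ^ N) * (1 + ‖latt d k - latt d m‖ ^ N)) ≤
        2 ^ N / (1 + r ^ N) *
          (1 / (1 + ‖latt d n - latt d m‖ ^ N) + 1 / (1 + ‖latt d k - latt d m‖ ^ N)) := by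
    intro m
    apply pointwise_bound N _ _ _ (norm_nonneg _) (norm_nonneg _) (norm_nonneg _)
    have h1 := norm_sub_le (latt d n - latt d m) (latt d k - latt d m)
    have h2 : latt d n - latt d m - (latt d k - latt d m) = latt d n - latt d k := by
      abel
    rw [h2] at h1
    exact h1
  have hsum_bound : Summable (fun m : Fin d → ℤ =>
      2 ^ N / (1 + r ^ N) *
        (1 / (1 + ‖latt d n - latt d m‖ ^ N) + 1 / (1 + ‖latt d k - latt d m‖ ^ N))) :=
    (hFn.add hFk).mul_left _
  have hsummable : Summable (fun m : Fin d → ℤ =>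
      1 / ((1 + ‖latt d n - latt d m‖ ^ N) * (1 + ‖latt d k - latt d m‖ ^ N))) :=
    Summable.of_nonneg_of_le (fun m => by positivity) hbound hsum_bound
  refine ⟨hsummable, ?_⟩
  calc (∑' m : Fin d → ℤ,
        1 / ((1 + ‖latt d n - latt d m‖ ^ N) * (1 + ‖latt d k - latt d m‖ ^ N)))
      ≤ ∑' m : Fin d → ℤ, 2 ^ N / (1 + r ^ N) *
          (1 / (1 + ‖latt d n - latt d m‖ ^ N) + 1 / (1 + ‖latt d k - latt d m‖ ^ N)) :=
        Summable.tsum_le_tsum hbound hsummable hsum_bound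
    _ = 2 ^ N / (1 + r ^ N) * (S + S) := by
        rw [tsum_mul_left, Summable.tsum_add hFn hFk, translate_tsum d N n, translate_tsum d N k]
    _ = (2 ^ N * (2 * S)) / (1 + r ^ N) := by ring
    _ ≤ (2 ^ N * (2 * S) + 1) / (1 + r ^ N) := by
        gcongr
        linarith
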